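/- The number of covariant causets (c-causets) with cardinality n, up to isomorphism, equals 2^(n-1). Equivalently, a c-causet with n elements is uniquely determined by its shell sequence, which is a composition of n (an ordered sequence of positive integers summing to n), and there are 2^(n-1) compositions of n. -/

import Mathlib

section General
variable {α : Type*} [PartialOrder α] [Fintype α]

lemma myheight_ne_top (a : α) : Order.height a ≠ ⊤ := by
  have h : Order.height a ≤ (Fintype.card α : ℕ∞) := by
    apply Order.height_le
    intro p _
    exact_mod_cast p.length_lt_card.le
  exact ne_top_of_le_ne_top (ENat.coe_ne_top _) h

lemma myheight_coe (a : α) : ((Order.height a).toNat : ℕ∞) = Order.height a :=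
  ENat.coe_toNat (myheight_ne_top a)

lemma myheight_toNat_lt {a b : α} :
    (Order.height a).toNat < (Order.height b).toNat ↔ Order.height a < Order.height b := by
  rw [← myheight_coe a, ← myheight_coe b, Nat.cast_lt, myheight_coe a, myheight_coe b]

lemma cc_lt_iff
    (hcc : ∀ a b : α, Order.height a ≠ Order.height b → a < b ∨ b < a)
    (a b : α) : a < b ↔ (Order.height a).toNat < (Order.height b).toNat := by
  rw [myheight_toNat_lt]
  constructor
  · intro h
    exact Order.height_strictMono h (lt_top_iff_ne_top.mpr (myheight_ne_top a))
  · intro h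
    rcases hcc a b h.ne with h' | h'
    · exact h'
    · exact absurd (Order.height_strictMono h' (lt_top_iff_ne_top.mpr (myheight_ne_top b)))
        (by simp [h.le.not_gt])

lemma cc_real (a : α) {v : ℕ} (hv : v < (Order.height a).toNat) :
    ∃ b : α, (Order.height b).toNat = v := by
  have : (v : ℕ∞) < Order.height a := by
    rw [← myheight_coe a, Nat.cast_lt]; exact hv
  obtain ⟨y, _, hy⟩ := (Order.coe_lt_height_iff
    (lt_top_iff_ne_top.mpr (myheight_ne_top a))).mp this
  exact ⟨y, by simp [hy]⟩

lemma height_eq_label {f : α → ℕ}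
    (hlt : ∀ a b : α, a < b ↔ f a < f b)
    (hreal : ∀ a : α, ∀ v, v < f a → ∃ b : α, f b = v) (a : α) :
    Order.height a = f a := by
  suffices H : ∀ m : ℕ, ∀ a : α, f a = m → Order.height a = m from H (f a) a rfl
  intro m
  induction m using Nat.strong_induction_on with
  | _ m IH =>
    intro a ha
    have hle : Order.height a ≤ m := by
      rw [Order.height_le_coe_iff]
      intro y hy
      have hfy : f y < m := ha ▸ (hlt y a).mp hy
      rw [IH (f y) hfy y rfl]
      exact_mod_cast hfy
    match m, ha with
    | 0, ha => exact le_antisymm (by exact_mod_cast hle) zero_le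
    | v+1, ha =>
      obtain ⟨b, hb⟩ := hreal a v (by omega)
      have hba : b < a := (hlt b a).mpr (by omega)
      have hhb : Order.height b = v := IH v (by omega) b hb
      have hlt' : (v : ℕ∞) < Order.height a := by
        rw [← hhb]
        exact Order.height_strictMono hba (lt_top_iff_ne_top.mpr (myheight_ne_top b))
      have : ((v+1 : ℕ) : ℕ∞) ≤ Order.height a := by
        push_cast
        exact ENat.add_one_le_iff (ENat.coe_ne_top v) |>.mpr hlt'
      exact le_antisymm hle this

lemma height_equiv {β : Type*} [PartialOrder β] [Fintype β] (e : α ≃ β)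
    (h : ∀ a b : α, a < b ↔ e a < e b) (a : α) : Order.height (e a) = Order.height a := by
  let iso : α ≃o β :=
    { toEquiv := e
      map_rel_iff' := by
        intro a b
        rw [le_iff_lt_or_eq, le_iff_lt_or_eq, ← h, EmbeddingLike.apply_eq_iff_eq] }
  exact Order.height_orderIso iso a

end General
set_option linter.unusedSectionVars false

/-- Extend `g : Fin (n-1) → Bool` to `ℕ → Bool` by `false`. -/
def gb (n : ℕ) (g : Fin (n-1) → Bool) : ℕ → Bool :=
  fun i => if h : i < n-1 then g ⟨i, h⟩ else false

/-- Prefix count of `true`s: the canonical height labeling. -/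
def Gf (n : ℕ) (g : Fin (n-1) → Bool) : ℕ → ℕ :=
  fun i => ((List.range i).filter (gb n g)).length

lemma Gf_zero (n g) : Gf n g 0 = 0 := rfl

lemma Gf_succ (n g) (i : ℕ) :
    Gf n g (i+1) = Gf n g i + (if gb n g i then 1 else 0) := by
  unfold Gf
  rw [List.range_succ, List.filter_append, List.length_append]
  split <;> simp_all

lemma Gf_mono (n g) : Monotone (Gf n g) :=
  monotone_nat_of_le_succ (fun i => by rw [Gf_succ]; omega)

lemma Gf_real (n g) : ∀ m v, v ≤ Gf n g m → ∃ k ≤ m, Gf n g k = v := by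
  intro m
  induction m with
  | zero => intro v hv; exact ⟨0, le_refl _, by simpa [Gf_zero] using (Nat.le_zero.mp hv).symm⟩
  | succ m IH =>
    intro v hv
    by_cases h : v ≤ Gf n g m
    · obtain ⟨k, hk, he⟩ := IH v h
      exact ⟨k, hk.trans (Nat.le_succ m), he⟩
    · refine ⟨m+1, le_refl _, ?_⟩
      have := Gf_succ n g m
      split at this <;> omega

/-- The partial order determined by the labeling `Gf n g`. -/
def Pord (n : ℕ) (g : Fin (n-1) → Bool) : PartialOrder (Fin n) where
  le a b := a = b ∨ Gf n g a < Gf n g b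
  lt a b := Gf n g a < Gf n g b
  le_refl a := Or.inl rfl
  le_trans a b c hab hbc := by
    rcases hab with rfl | h
    · exact hbc
    · rcases hbc with rfl | h'
      · exact Or.inr h
      · exact Or.inr (h.trans h')
  lt_iff_le_not_ge a b := by
    show Gf n g a < Gf n g b ↔ (a = b ∨ Gf n g a < Gf n g b) ∧ ¬(b = a ∨ Gf n g b < Gf n g a)
    constructor
    · intro h
      exact ⟨Or.inr h, by rintro (rfl | h') <;> omega⟩
    · rintro ⟨rfl | h, hn⟩
      · exact absurd (Or.inl rfl) hn
      · exact h
  le_antisymm a b hab hba := by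
    rcases hab with rfl | h
    · rfl
    · rcases hba with rfl | h'
      · rfl
      · omega

lemma Pord_lt (n g) (a b : Fin n) : (Pord n g).lt a b ↔ Gf n g a < Gf n g b := Iff.rfl

lemma Pord_height (n : ℕ) (g : Fin (n-1) → Bool) (a : Fin n) :
    @Order.height (Fin n) (Pord n g).toPreorder a = Gf n g a := by
  refine @height_eq_label (Fin n) (Pord n g) _ (fun a => Gf n g a)
    (fun a b => by exact Iff.rfl) ?_ a
  intro a v hv
  obtain ⟨k, hk, he⟩ := Gf_real n g a v hv.le
  exact ⟨⟨k, lt_of_le_of_lt hk a.isLt⟩, he⟩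

/-- A c-causet structure on `Fin n`: a partial order in which any two elements of
different heights are comparable. -/
def CCausetOrder (n : ℕ) : Type :=
  {r : PartialOrder (Fin n) //
    ∀ a b : Fin n, @Order.height (Fin n) r.toPreorder a ≠ @Order.height (Fin n) r.toPreorder b →
      r.lt a b ∨ r.lt b a}

/-- Order isomorphism of two c-causet structures on `Fin n`. -/
def CCausetIso {n : ℕ} (r s : CCausetOrder n) : Prop :=
  ∃ e : Fin n ≃ Fin n, ∀ a b : Fin n, r.1.lt a b ↔ s.1.lt (e a) (e b)

/-- The c-causet coming from a step function `g`. -/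
def CC (n : ℕ) (g : Fin (n-1) → Bool) : CCausetOrder n :=
  ⟨Pord n g, by
    intro a b h
    rw [Pord_height, Pord_height] at h
    have h' : Gf n g a ≠ Gf n g b := fun he => h (by rw [he])
    rcases Nat.lt_or_ge (Gf n g a) (Gf n g b) with h2 | h2
    · exact Or.inl ((Pord_lt n g a b).mpr h2)
    · exact Or.inr ((Pord_lt n g b a).mpr (by omega))⟩

lemma ccIso_equiv (n : ℕ) : Equivalence (CCausetIso (n := n)) where
  refl r := ⟨Equiv.refl _, fun a b => Iff.rfl⟩
  symm := fun {r s} ⟨e, h⟩ => ⟨e.symm, fun a b => by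
    have := (h (e.symm a) (e.symm b)).symm
    simpa using this⟩
  trans := fun {r s t} ⟨e, h⟩ ⟨e', h'⟩ =>
    ⟨e.trans e', fun a b => (h a b).trans (h' (e a) (e b))⟩

lemma Phi_inj (n : ℕ) :
    Function.Injective (fun g : Fin (n-1) → Bool => Quot.mk (CCausetIso (n:=n)) (CC n g)) := by
  intro g g' hq
  have hiso : CCausetIso (CC n g) (CC n g') :=
    ((ccIso_equiv n).eqvGen_iff).mp (Quot.eq.mp hq)
  obtain ⟨e, h⟩ := hiso
  have hh : ∀ a : Fin n, Gf n g' (e a) = Gf n g a := by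
    intro a
    have h2 := @height_equiv (Fin n) (Pord n g) _ (Fin n) (Pord n g') _ e
      (fun a b => by exact h a b) a
    rw [Pord_height, Pord_height] at h2
    exact_mod_cast h2
  have hmono : Monotone (fun i : Fin n => Gf n g i) :=
    fun a b hab => Gf_mono n g hab
  have hmono' : Monotone (fun i : Fin n => Gf n g' i) :=
    fun a b hab => Gf_mono n g' hab
  have hcomp : (fun i : Fin n => Gf n g' ↑i) ∘ (e : Equiv.Perm (Fin n))
      = (fun i : Fin n => Gf n g' ↑i) ∘ (1 : Equiv.Perm (Fin n)) := by
    apply Tuple.unique_monotone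
    · have : ((fun i : Fin n => Gf n g' ↑i) ∘ (e : Equiv.Perm (Fin n)))
          = fun i : Fin n => Gf n g ↑i := funext fun i => hh i
      rw [this]; exact hmono
    · simpa using hmono'
  have hf : ∀ i : Fin n, Gf n g i = Gf n g' i := by
    intro i
    have := congrFun hcomp i
    simp only [Function.comp, Equiv.Perm.coe_one, id] at this
    rw [← hh i]
    exact this
  funext j
  have hj1 : (j : ℕ) < n - 1 := j.isLt
  have hj2 : (j : ℕ) < n := by omega
  have hj3 : (j : ℕ) + 1 < n := by omega
  have e0 : Gf n g j = Gf n g' j := hf ⟨j, hj2⟩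
  have e1 : Gf n g (j+1) = Gf n g' (j+1) := hf ⟨j+1, hj3⟩
  have s1 := Gf_succ n g j
  have s2 := Gf_succ n g' j
  have hgb : gb n g j = g j := by
    rw [gb, dif_pos hj1]
  have hgb' : gb n g' j = g' j := by
    rw [gb, dif_pos hj1]
  rw [hgb] at s1; rw [hgb'] at s2
  cases hx : g j <;> cases hy : g' j <;> simp_all <;> omega

lemma Phi_surj (n : ℕ) (hn : 0 < n) :
    Function.Surjective (fun g : Fin (n-1) → Bool => Quot.mk (CCausetIso (n:=n)) (CC n g)) := by
  intro q
  induction q using Quot.ind with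
  | _ r =>
  set kh : Fin n → ℕ := fun a => (@Order.height (Fin n) r.1.toPreorder a).toNat with hkh
  have hlt : ∀ a b, r.1.lt a b ↔ kh a < kh b := fun a b => by
    exact @cc_lt_iff (Fin n) r.1 _ r.2 a b
  have hreal : ∀ a : Fin n, ∀ v, v < kh a → ∃ b, kh b = v := fun a v hv =>
    @cc_real (Fin n) r.1 _ a v hv
  set σ : Equiv.Perm (Fin n) := Tuple.sort kh with hσ
  have hmono : Monotone (kh ∘ σ) := Tuple.monotone_sort kh
  set f : Fin n → ℕ := kh ∘ σ with hfdef
  have hfb : ∀ b : Fin n, f (σ.symm b) = kh b := by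
    intro b; simp [hfdef, Function.comp]
  have f0 : f ⟨0, hn⟩ = 0 := by
    by_contra h0
    have h1 : 0 < f ⟨0, hn⟩ := Nat.pos_of_ne_zero h0
    obtain ⟨b, hb⟩ := hreal (σ ⟨0, hn⟩) 0 h1
    have h2 : f (σ.symm b) = 0 := by rw [hfb]; exact hb
    have h3 := hmono (show (⟨0, hn⟩ : Fin n) ≤ σ.symm b by simp [Fin.le_def])
    omega
  have fstep : ∀ i : ℕ, (h2 : i + 1 < n) → f ⟨i+1, h2⟩ ≤ f ⟨i, by omega⟩ + 1 := by
    intro i h2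
    by_contra hcon
    push_neg at hcon
    obtain ⟨b, hb⟩ := hreal (σ ⟨i+1, h2⟩) (f ⟨i, by omega⟩ + 1) hcon
    have hfi0 : f (σ.symm b) = f ⟨i, by omega⟩ + 1 := by rw [hfb]; exact hb
    have h3 : ¬ (σ.symm b ≤ (⟨i, by omega⟩ : Fin n)) := fun hle => by
      have := hmono hle; omega
    have h4 : ¬ ((⟨i+1, h2⟩ : Fin n) ≤ σ.symm b) := fun hle => by
      have := hmono hle; omega
    simp only [Fin.le_def, not_le] at h3 h4
    omega
  set g : Fin (n-1) → Bool :=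
    fun j => decide (f ⟨j.val+1, by have := j.isLt; omega⟩
      = f ⟨j.val, by have := j.isLt; omega⟩ + 1) with hg
  have key : ∀ i, ∀ h : i < n, Gf n g i = f ⟨i, h⟩ := by
    intro i
    induction i with
    | zero => intro h; exact (Gf_zero n g).trans f0.symm
    | succ i IH =>
      intro h
      have hi : i < n := by omega
      have hlt1 : i < n - 1 := by omega
      rw [Gf_succ, IH hi]
      have hgb : gb n g i = g ⟨i, hlt1⟩ := dif_pos hlt1
      rw [hgb]
      have hs := fstep i h
      have hm : f ⟨i, hi⟩ ≤ f ⟨i+1, h⟩ := hmono (by simp [Fin.le_def])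
      by_cases hd : f ⟨i+1, h⟩ = f ⟨i, hi⟩ + 1
      · have : g ⟨i, hlt1⟩ = true := by simp [hg]; exact hd
        rw [this]; simp; omega
      · have : g ⟨i, hlt1⟩ = false := by simp [hg]; exact hd
        rw [this]; simp; omega
  refine ⟨g, ?_⟩
  have hiso : CCausetIso r (CC n g) := by
    refine ⟨σ.symm, ?_⟩
    intro a b
    rw [hlt a b]
    show kh a < kh b ↔ (Pord n g).lt (σ.symm a) (σ.symm b)
    rw [Pord_lt, key _ (σ.symm a).isLt, key _ (σ.symm b).isLt]
    rw [show (⟨(σ.symm a).val, (σ.symm a).isLt⟩ : Fin n) = σ.symm a from rfl]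
    rw [show (⟨(σ.symm b).val, (σ.symm b).isLt⟩ : Fin n) = σ.symm b from rfl]
    rw [hfb, hfb]
  exact (Quot.sound hiso).symm

/-- The number of c-causets of cardinality `n`, up to isomorphism, is `2^(n-1)`. -/
theorem stmt_1 (n : ℕ) (hn : 0 < n) :
    Nat.card (Quot (CCausetIso (n := n))) = 2 ^ (n - 1) := by
  have hbij : Function.Bijective
      (fun g : Fin (n-1) → Bool => Quot.mk (CCausetIso (n:=n)) (CC n g)) :=
    ⟨Phi_inj n, Phi_surj n hn⟩
  rw [← Nat.card_eq_of_bijective _ hbij]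
  simp [Nat.card_eq_fintype_card]
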